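/- In a symmetric monoidal category with dual objects, the class of morphisms satisfying the two no-signalling conditions (discarding all 'causal' outputs factorizes through discarding causal inputs, and preparing-then-marginalizing 'retrocausal' wires factorizes analogously) is closed under sequential composition. -/
import Mathlib


open CategoryTheory MonoidalCategory

/-- Work in a process theory (symmetric monoidal category) with causal systems
`A, C, E` (each equipped with its unique effect `e_•`) and retrocausal systems
`B, D, Q` (each equipped with its unique state `s_•`).  A morphism
`F : A ⊗ B ⟶ C ⊗ D` is no-signalling if discarding its causal output factors through
discarding its causal input (via some retrocausal process `F_r`), and feeding its
retrocausal input with the unique state factors through the unique state on its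
retrocausal output (via some causal process `F_c`).  The class of no-signalling
morphisms is closed under sequential composition: if `F` and `G` are no-signalling
then so is `F ≫ G`. -/
theorem noSignalling_comp {𝒞 : Type*} [Category 𝒞] [MonoidalCategory 𝒞]
    [SymmetricCategory 𝒞]
    (A C E B D Q : 𝒞)
    (eA : A ⟶ 𝟙_ 𝒞) (eC : C ⟶ 𝟙_ 𝒞) (eE : E ⟶ 𝟙_ 𝒞)
    (sB : 𝟙_ 𝒞 ⟶ B) (sD : 𝟙_ 𝒞 ⟶ D) (sQ : 𝟙_ 𝒞 ⟶ Q)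
    (F : A ⊗ B ⟶ C ⊗ D) (G : C ⊗ D ⟶ E ⊗ Q)
    (hF₁ : ∃ Fr : B ⟶ D,
      F ≫ (eC ▷ D) ≫ (λ_ D).hom = (eA ▷ B) ≫ (λ_ B).hom ≫ Fr)
    (hF₂ : ∃ Fc : A ⟶ C,
      (ρ_ A).inv ≫ (A ◁ sB) ≫ F = Fc ≫ (ρ_ C).inv ≫ (C ◁ sD))
    (hG₁ : ∃ Gr : D ⟶ Q,
      G ≫ (eE ▷ Q) ≫ (λ_ Q).hom = (eC ▷ D) ≫ (λ_ D).hom ≫ Gr)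
    (hG₂ : ∃ Gc : C ⟶ E,
      (ρ_ C).inv ≫ (C ◁ sD) ≫ G = Gc ≫ (ρ_ E).inv ≫ (E ◁ sQ)) :
    (∃ Hr : B ⟶ Q,
      (F ≫ G) ≫ (eE ▷ Q) ≫ (λ_ Q).hom = (eA ▷ B) ≫ (λ_ B).hom ≫ Hr) ∧
    (∃ Hc : A ⟶ E,
      (ρ_ A).inv ≫ (A ◁ sB) ≫ (F ≫ G) = Hc ≫ (ρ_ E).inv ≫ (E ◁ sQ)) := by
  obtain ⟨Fr, hFr⟩ := hF₁
  obtain ⟨Fc, hFc⟩ := hF₂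
  obtain ⟨Gr, hGr⟩ := hG₁
  obtain ⟨Gc, hGc⟩ := hG₂
  refine ⟨⟨Fr ≫ Gr, ?_⟩, ⟨Fc ≫ Gc, ?_⟩⟩
  · calc (F ≫ G) ≫ eE ▷ Q ≫ (λ_ Q).hom
        = F ≫ (G ≫ eE ▷ Q ≫ (λ_ Q).hom) := by simp
      _ = F ≫ eC ▷ D ≫ (λ_ D).hom ≫ Gr := by rw [hGr]
      _ = (F ≫ eC ▷ D ≫ (λ_ D).hom) ≫ Gr := by simp
      _ = (eA ▷ B ≫ (λ_ B).hom ≫ Fr) ≫ Gr := by rw [hFr]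
      _ = eA ▷ B ≫ (λ_ B).hom ≫ Fr ≫ Gr := by simp
  · calc (ρ_ A).inv ≫ A ◁ sB ≫ F ≫ G
        = ((ρ_ A).inv ≫ A ◁ sB ≫ F) ≫ G := by simp
      _ = (Fc ≫ (ρ_ C).inv ≫ C ◁ sD) ≫ G := by rw [hFc]
      _ = Fc ≫ ((ρ_ C).inv ≫ C ◁ sD ≫ G) := by simp
      _ = Fc ≫ Gc ≫ (ρ_ E).inv ≫ E ◁ sQ := by rw [hGc]
      _ = (Fc ≫ Gc) ≫ (ρ_ E).inv ≫ E ◁ sQ := by simp
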